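/- Let T, S ∈ M_n(ℂ) be positive definite Hermitian matrices and suppose there are positive reals m ≤ m' < M' ≤ M with m·I ≤ T ≤ m'·I and M'·I ≤ S ≤ M·I in the Löwner order. Let 0 ≤ ν < κ ≤ 1, set h = M'/m', r = min{ν/κ, 1 − ν/κ} and r' = min{2r, 1 − 2r}. Then, in the Löwner order, r·(H_κ(T,S) + H_0(T,S) − 2·H_{κ/2}(T,S)) + K(h^{κ/2}, 2)^{r'} · H_ν(T,S) ≤ H_0(T,S) − (ν/κ)·(H_0(T,S) − H_κ(T,S)). -/

import Mathlib

open scoped ComplexOrder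

/-- Matrix power of a (Hermitian) matrix via the continuous functional calculus:
`t ↦ t ^ α` is applied to the eigenvalues. -/
noncomputable def mpow {n : ℕ} (T : Matrix (Fin n) (Fin n) ℂ) (α : ℝ) :
    Matrix (Fin n) (Fin n) ℂ :=
  cfc (fun x : ℝ => x ^ α) T

/-- The κ-weighted geometric mean `T ♯_κ S = T^(1/2) (T^(-1/2) S T^(-1/2))^κ T^(1/2)`. -/
noncomputable def geomMean {n : ℕ} (T S : Matrix (Fin n) (Fin n) ℂ) (κ : ℝ) :
    Matrix (Fin n) (Fin n) ℂ :=
  mpow T (1 / 2) * mpow (mpow T (-(1 / 2)) * S * mpow T (-(1 / 2))) κ * mpow T (1 / 2)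

/-- The operator Heinz mean `H_κ(T,S) = (T ♯_κ S + T ♯_{1-κ} S)/2`. -/
noncomputable def opHeinz {n : ℕ} (κ : ℝ) (T S : Matrix (Fin n) (Fin n) ℂ) :
    Matrix (Fin n) (Fin n) ℂ :=
  (2⁻¹ : ℝ) • (geomMean T S κ + geomMean T S (1 - κ))

/-- The Löwner order: `A ≤ B` iff `B - A` is positive semidefinite. -/
def LoewnerLE {n : ℕ} (A B : Matrix (Fin n) (Fin n) ℂ) : Prop := (B - A).PosSemidef

/-- The Kantorovich constant `K(t,2) = (t+1)^2/(4t)`. -/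
noncomputable def kantorovich (t : ℝ) : ℝ := (t + 1) ^ 2 / (4 * t)



lemma kant_pos {t : ℝ} (ht : 0 < t) : 0 < kantorovich t := by
  unfold kantorovich; positivity

lemma one_le_kant {t : ℝ} (ht : 0 < t) : 1 ≤ kantorovich t := by
  unfold kantorovich
  rw [le_div_iff₀ (by positivity)]
  nlinarith [sq_nonneg (t - 1)]

lemma kant_mono {x y : ℝ} (hx : 1 ≤ x) (hxy : x ≤ y) : kantorovich x ≤ kantorovich y := by
  unfold kantorovich
  rw [div_le_div_iff₀ (by positivity) (by nlinarith)]
  nlinarith [mul_nonneg (sub_nonneg.mpr hxy) (sub_nonneg.mpr (one_le_mul_of_one_le_of_one_le hx (hx.trans hxy) : (1:ℝ) ≤ x*y))]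

lemma kant_inv {t : ℝ} (ht : 0 < t) : kantorovich t⁻¹ = kantorovich t := by
  unfold kantorovich
  field_simp
  ring

private lemma lemZhalf {a b : ℝ} (ha : 0 < a) (hb : 0 < b) {lam : ℝ} (h0 : 0 ≤ lam)
    (h1 : lam ≤ 1/2) :
    kantorovich (b/a) ^ lam * (a ^ (1-lam) * b ^ lam) ≤ (1-lam)*a + lam*b := by
  have hK := kant_pos (t := b/a) (by positivity)
  have hab : (0:ℝ) < (a+b)/2 := by positivity
  have amgm := Real.geom_mean_le_arith_mean2_weighted (w₁ := 1 - 2*lam) (w₂ := 2*lam)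
    (p₁ := a) (p₂ := (a+b)/2) (by linarith) (by linarith) ha.le hab.le (by ring)
  have hsq : ((a+b)/2) ^ ((2:ℝ)*lam) = kantorovich (b/a) ^ lam * (a^lam * b^lam) := by
    have h2 : ((a+b)/2) ^ ((2:ℝ)*lam) = (((a+b)/2) ^ (2:ℝ)) ^ lam :=
      Real.rpow_mul hab.le 2 lam
    have h3 : ((a+b)/2) ^ (2:ℝ) = kantorovich (b/a) * (a*b) := by
      rw [show (2:ℝ) = ((2:ℕ):ℝ) by norm_num, Real.rpow_natCast]
      unfold kantorovich
      field_simp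
      ring
    rw [h2, h3, Real.mul_rpow hK.le (by positivity), Real.mul_rpow ha.le hb.le]
  calc kantorovich (b/a) ^ lam * (a ^ (1-lam) * b ^ lam)
      = a ^ (1 - 2*lam) * ((a+b)/2) ^ ((2:ℝ)*lam) := by
        rw [hsq]
        rw [show (1-lam) = (1-2*lam) + lam by ring, Real.rpow_add ha]
        ring
    _ ≤ (1 - 2*lam) * a + 2*lam * ((a+b)/2) := amgm
    _ = (1-lam)*a + lam*b := by ring

lemma lemZ {a b : ℝ} (ha : 0 < a) (hb : 0 < b) {lam : ℝ} (h0 : 0 ≤ lam) (h1 : lam ≤ 1) :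
    kantorovich (b/a) ^ (min lam (1-lam)) * (a ^ (1-lam) * b ^ lam) ≤ (1-lam)*a + lam*b := by
  rcases le_or_gt lam (1/2) with hc | hc
  · rw [min_eq_left (by linarith)]
    exact lemZhalf ha hb h0 hc
  · rw [min_eq_right (by linarith)]
    have := lemZhalf hb ha (lam := 1 - lam) (by linarith) (by linarith)
    rw [show a/b = (b/a)⁻¹ by rw [inv_div], kant_inv (by positivity)] at this
    calc kantorovich (b/a) ^ (1-lam) * (a ^ (1-lam) * b ^ lam)
        = kantorovich (b/a) ^ (1-lam) * (b ^ (1-(1-lam)) * a ^ (1-lam)) := by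
          rw [show 1-(1-lam) = lam by ring]; ring
      _ ≤ (1-(1-lam))*b + (1-lam)*a := this
      _ = (1-lam)*a + lam*b := by ring

lemma lemL {a b : ℝ} (ha : 0 < a) (hb : 0 < b) {v : ℝ} (h0 : 0 ≤ v) (h1 : v ≤ 1) :
    min v (1-v) * (a + b - 2*(a*b) ^ ((1:ℝ)/2))
      + kantorovich ((b/a) ^ ((1:ℝ)/2)) ^ (min (2*min v (1-v)) (1 - 2*min v (1-v)))
        * (a^(1-v)*b^v)
      ≤ (1-v)*a + v*b := by
  set s : ℝ := (a*b) ^ ((1:ℝ)/2) with hs_def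
  have hs : 0 < s := by positivity
  have hsab : s = a ^ ((1:ℝ)/2) * b ^ ((1:ℝ)/2) := Real.mul_rpow ha.le hb.le
  have haa : a ^ ((1:ℝ)/2) * a ^ ((1:ℝ)/2) = a := by
    rw [← Real.rpow_add ha]; norm_num
  have hbb : b ^ ((1:ℝ)/2) * b ^ ((1:ℝ)/2) = b := by
    rw [← Real.rpow_add hb]; norm_num
  rcases le_or_gt v (1/2) with hc | hc
  · rw [min_eq_left (by linarith)]
    have Z := lemZ ha hs (lam := 2*v) (by linarith) (by linarith)
    have f1 : s/a = (b/a) ^ ((1:ℝ)/2) := by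
      rw [Real.div_rpow hb.le ha.le, hsab]
      rw [div_eq_div_iff (by positivity) (by positivity)]
      nlinarith [haa, Real.rpow_nonneg ha.le ((1:ℝ)/2), Real.rpow_nonneg hb.le ((1:ℝ)/2)]
    have f2 : a ^ (1-2*v) * s ^ ((2:ℝ)*v) = a ^ (1-v) * b ^ v := by
      have : s ^ ((2:ℝ)*v) = a ^ v * b ^ v := by
        rw [hs_def, ← Real.rpow_mul (by positivity)]
        rw [show (1:ℝ)/2*(2*v) = v by ring, Real.mul_rpow ha.le hb.le]
      rw [this, show (1:ℝ)-v = (1-2*v) + v by ring, Real.rpow_add ha]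
      ring
    rw [f1, f2] at Z
    nlinarith [Z]
  · rw [min_eq_right (by linarith)]
    have Z := lemZ hb hs (lam := 2-2*v) (by linarith) (by linarith)
    have f1 : s/b = ((b/a) ^ ((1:ℝ)/2))⁻¹ := by
      rw [← Real.inv_rpow (by positivity), inv_div, Real.div_rpow ha.le hb.le, hsab]
      rw [div_eq_div_iff (by positivity) (by positivity)]
      nlinarith [hbb, Real.rpow_nonneg ha.le ((1:ℝ)/2), Real.rpow_nonneg hb.le ((1:ℝ)/2)]
    have f2 : b ^ (1-(2-2*v)) * s ^ ((2:ℝ)-2*v) = a ^ (1-v) * b ^ v := by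
      have : s ^ ((2:ℝ)-2*v) = a ^ (1-v) * b ^ (1-v) := by
        rw [hs_def, ← Real.rpow_mul (by positivity)]
        rw [show (1:ℝ)/2*(2-2*v) = 1-v by ring, Real.mul_rpow ha.le hb.le]
      rw [this, show (v:ℝ) = (1-(2-2*v)) + (1-v) by ring, Real.rpow_add hb]
      ring
    rw [f1, kant_inv (by positivity), f2] at Z
    have hmin : min (2-2*v) (1-(2-2*v)) = min (2*(1-v)) (1-2*(1-v)) := by ring_nf
    rw [hmin] at Z
    nlinarith [Z]

lemma scalar_main {h κ ν r r' : ℝ} (hh : 1 < h) (hν : 0 ≤ ν) (hνκ : ν < κ) (hκ : κ ≤ 1)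
    (hr : r = min (ν/κ) (1 - ν/κ)) (hr' : r' = min (2*r) (1 - 2*r))
    {t : ℝ} (ht : h ≤ t) :
    r * (2⁻¹*(t^κ + t^(1-κ)) + 2⁻¹*(t^(0:ℝ) + t^(1-(0:ℝ))) - 2*(2⁻¹*(t^(κ/2)+t^(1-κ/2))))
      + kantorovich (h^(κ/2)) ^ r' * (2⁻¹*(t^ν + t^(1-ν)))
    ≤ 2⁻¹*(t^(0:ℝ)+t^(1-(0:ℝ))) - (ν/κ)*(2⁻¹*(t^(0:ℝ)+t^(1-(0:ℝ))) - 2⁻¹*(t^κ+t^(1-κ))) := by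
  have hκ0 : 0 < κ := lt_of_le_of_lt hν hνκ
  set μ : ℝ := ν/κ with hμ
  have hμ0 : 0 ≤ μ := by positivity
  have hμ1 : μ ≤ 1 := by rw [hμ, div_le_one hκ0]; linarith
  have ht1 : 1 < t := lt_of_lt_of_le hh ht
  have ht0 : 0 < t := lt_trans one_pos ht1
  have hr0 : 0 ≤ r := by rw [hr]; exact le_min hμ0 (by linarith)
  have hrhalf : r ≤ 1/2 := by
    rw [hr]; rcases le_total μ (1/2) with h' | h'
    · exact (min_le_left _ _).trans h'
    · exact (min_le_right _ _).trans (by linarith)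
  have hr'0 : 0 ≤ r' := by rw [hr']; exact le_min (by linarith) (by linarith)
  -- Kantorovich comparison
  have hhk : 1 ≤ h^(κ/2) := Real.one_le_rpow hh.le (by positivity)
  have hht : h^(κ/2) ≤ t^(κ/2) :=
    Real.rpow_le_rpow (by linarith) ht (by positivity)
  have Kb : kantorovich (h^(κ/2)) ^ r' ≤ kantorovich (t^(κ/2)) ^ r' :=
    Real.rpow_le_rpow (kant_pos (by linarith)).le (kant_mono hhk hht) hr'0
  -- first application of lemL : a = 1, b = t^κ
  have L1 := lemL one_pos (Real.rpow_pos_of_pos ht0 κ) hμ0 hμ1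
  have e1 : ((1:ℝ)*t^κ) ^ ((1:ℝ)/2) = t^(κ/2) := by
    rw [one_mul, ← Real.rpow_mul ht0.le, show κ*((1:ℝ)/2) = κ/2 by ring]
  have e2 : ((t^κ/(1:ℝ)) : ℝ) ^ ((1:ℝ)/2) = t^(κ/2) := by
    rw [div_one, ← Real.rpow_mul ht0.le, show κ*((1:ℝ)/2) = κ/2 by ring]
  have e3 : ((1:ℝ)^(1-μ) * (t^κ)^μ) = t^ν := by
    rw [Real.one_rpow, one_mul, ← Real.rpow_mul ht0.le, hμ,
      show κ*(ν/κ) = ν by field_simp]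
  rw [e1, e2, e3, ← hr, ← hr'] at L1
  -- second application : a = t, b = t^(1-κ)
  have L2 := lemL ht0 (Real.rpow_pos_of_pos ht0 (1-κ)) hμ0 hμ1
  have f1 : (t*t^(1-κ)) ^ ((1:ℝ)/2) = t^(1-κ/2) := by
    rw [show t*t^(1-κ) = t^(1:ℝ)*t^(1-κ) by rw [Real.rpow_one],
      ← Real.rpow_add ht0, ← Real.rpow_mul ht0.le,
      show ((1:ℝ)+(1-κ))*((1:ℝ)/2) = 1-κ/2 by ring]
  have f2 : ((t^(1-κ)/t) : ℝ) ^ ((1:ℝ)/2) = (t^(κ/2))⁻¹ := by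
    have g : t^(1-κ)/t = t^(-κ) := by
      rw [div_eq_iff ht0.ne', ← Real.rpow_add_one ht0.ne', show -κ+1 = 1-κ by ring]
    rw [g, ← Real.rpow_mul ht0.le, show -κ*((1:ℝ)/2) = -(κ/2) by ring,
      Real.rpow_neg ht0.le]
  have f3 : (t^(1-μ) * (t^(1-κ))^μ) = t^(1-ν) := by
    rw [← Real.rpow_mul ht0.le, ← Real.rpow_add ht0, hμ,
      show 1-ν/κ+(1-κ)*(ν/κ) = 1-ν by field_simp; ring]
  rw [f1, f2, kant_inv (by positivity), f3, ← hr, ← hr'] at L2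
  have E0 : (0:ℝ) ≤ t^ν := (Real.rpow_pos_of_pos ht0 ν).le
  have F0 : (0:ℝ) ≤ t^(1-ν) := (Real.rpow_pos_of_pos ht0 (1-ν)).le
  have Kmul : kantorovich (h^(κ/2)) ^ r' * (t^ν + t^(1-ν))
      ≤ kantorovich (t^(κ/2)) ^ r' * (t^ν + t^(1-ν)) :=
    mul_le_mul_of_nonneg_right Kb (by linarith)
  rw [show (1:ℝ)-(0:ℝ) = 1 by norm_num, Real.rpow_zero, Real.rpow_one]
  rw [hμ] at L1 L2 ⊢
  linarith [L1, L2, Kmul]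



section hermcfc

open Matrix

variable {n : ℕ} {A : Matrix (Fin n) (Fin n) ℂ} (hA : A.IsHermitian)

lemma herm_cfc_add (f g : ℝ → ℝ) :
    hA.cfc f + hA.cfc g = hA.cfc (fun x => f x + g x) := by
  unfold Matrix.IsHermitian.cfc
  simp only [Unitary.conjStarAlgAut_apply]
  rw [← add_mul, ← mul_add, diagonal_add,
    diagonal_eq_diagonal_iff.mpr (fun i => by simp [Function.comp] : ∀ i,
      ((RCLike.ofReal ∘ f ∘ hA.eigenvalues) i + (RCLike.ofReal ∘ g ∘ hA.eigenvalues) i : ℂ)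
        = (RCLike.ofReal ∘ (fun x => f x + g x) ∘ hA.eigenvalues) i)]

lemma herm_cfc_sub (f g : ℝ → ℝ) :
    hA.cfc f - hA.cfc g = hA.cfc (fun x => f x - g x) := by
  unfold Matrix.IsHermitian.cfc
  simp only [Unitary.conjStarAlgAut_apply]
  rw [← sub_mul, ← mul_sub, diagonal_sub,
    diagonal_eq_diagonal_iff.mpr (fun i => by simp [Function.comp] : ∀ i,
      ((RCLike.ofReal ∘ f ∘ hA.eigenvalues) i - (RCLike.ofReal ∘ g ∘ hA.eigenvalues) i : ℂ)
        = (RCLike.ofReal ∘ (fun x => f x - g x) ∘ hA.eigenvalues) i)]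

lemma herm_cfc_smul (c : ℝ) (f : ℝ → ℝ) :
    c • hA.cfc f = hA.cfc (fun x => c * f x) := by
  unfold Matrix.IsHermitian.cfc
  simp only [Unitary.conjStarAlgAut_apply]
  have hD : c • (diagonal (RCLike.ofReal ∘ f ∘ hA.eigenvalues) : Matrix (Fin n) (Fin n) ℂ)
      = diagonal (RCLike.ofReal ∘ (fun x => c * f x) ∘ hA.eigenvalues) := by
    rw [← diagonal_smul]
    exact diagonal_eq_diagonal_iff.mpr fun i => by
      simp [Function.comp, Complex.real_smul]
  rw [← hD, mul_smul_comm, smul_mul_assoc]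

lemma herm_cfc_mul (f g : ℝ → ℝ) :
    hA.cfc f * hA.cfc g = hA.cfc (fun x => f x * g x) := by
  unfold Matrix.IsHermitian.cfc
  simp only [Unitary.conjStarAlgAut_apply]
  have hUU : (star (hA.eigenvectorUnitary : Matrix (Fin n) (Fin n) ℂ))
      * (hA.eigenvectorUnitary : Matrix (Fin n) (Fin n) ℂ) = 1 :=
    Unitary.coe_star_mul_self _
  have hD : (diagonal (RCLike.ofReal ∘ f ∘ hA.eigenvalues) : Matrix (Fin n) (Fin n) ℂ)
      * diagonal (RCLike.ofReal ∘ g ∘ hA.eigenvalues)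
      = diagonal (RCLike.ofReal ∘ (fun x => f x * g x) ∘ hA.eigenvalues) := by
    rw [diagonal_mul_diagonal]
    exact diagonal_eq_diagonal_iff.mpr fun i => by simp [Function.comp]
  rw [show ∀ (U D1 D2 V : Matrix (Fin n) (Fin n) ℂ), U*D1*V*(U*D2*V) = U*(D1*(V*U)*D2)*V
    from fun U D1 D2 V => by noncomm_ring, hUU, mul_one, hD]

lemma herm_cfc_one : hA.cfc (fun _ : ℝ => (1:ℝ)) = 1 := by
  unfold Matrix.IsHermitian.cfc
  simp only [Unitary.conjStarAlgAut_apply]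
  have : diagonal (RCLike.ofReal ∘ (fun _ : ℝ => (1:ℝ)) ∘ hA.eigenvalues)
      = (1 : Matrix (Fin n) (Fin n) ℂ) := by
    rw [← diagonal_one]
    congr 1
  rw [this, mul_one, Matrix.mem_unitaryGroup_iff.mp hA.eigenvectorUnitary.2]

lemma herm_cfc_congr {f g : ℝ → ℝ} (hfg : ∀ i, f (hA.eigenvalues i) = g (hA.eigenvalues i)) :
    hA.cfc f = hA.cfc g := by
  unfold Matrix.IsHermitian.cfc
  simp only [Unitary.conjStarAlgAut_apply]
  have : (RCLike.ofReal ∘ f ∘ hA.eigenvalues : Fin n → ℂ)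
      = RCLike.ofReal ∘ g ∘ hA.eigenvalues :=
    funext fun i => by simp [Function.comp, hfg i]
  rw [this]

lemma herm_cfc_isHermitian (f : ℝ → ℝ) : (hA.cfc f).IsHermitian := by
  unfold Matrix.IsHermitian.cfc
  simp only [Unitary.conjStarAlgAut_apply]
  rw [Matrix.star_eq_conjTranspose]
  exact Matrix.isHermitian_mul_mul_conjTranspose _
    (Matrix.isHermitian_diagonal_of_self_adjoint _
      (funext fun i => by simp [Function.comp, Pi.star_def]))

lemma herm_cfc_psd {f : ℝ → ℝ} (hf : ∀ i, 0 ≤ f (hA.eigenvalues i)) :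
    (hA.cfc f).PosSemidef := by
  unfold Matrix.IsHermitian.cfc
  simp only [Unitary.conjStarAlgAut_apply]
  rw [Matrix.star_eq_conjTranspose]
  apply Matrix.PosSemidef.mul_mul_conjTranspose_same
  refine Matrix.posSemidef_diagonal_iff.mpr fun i => ?_
  simpa using Complex.zero_le_real.mpr (hf i)

end hermcfc

section eigenlb

open Matrix

variable {n : ℕ}

lemma eigen_lb {X : Matrix (Fin n) (Fin n) ℂ} (hX : X.IsHermitian) {c : ℝ}
    (hpsd : (X - (c:ℂ) • (1:Matrix (Fin n) (Fin n) ℂ)).PosSemidef) (i : Fin n) :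
    c ≤ hX.eigenvalues i := by
  set v : Fin n → ℂ := ⇑(hX.eigenvectorBasis i) with hv
  have hvv : dotProduct (star v) v = 1 := by
    have h1 : ‖hX.eigenvectorBasis i‖ = 1 := hX.eigenvectorBasis.orthonormal.1 i
    have h2 := EuclideanSpace.inner_eq_star_dotProduct (𝕜 := ℂ)
      (hX.eigenvectorBasis i) (hX.eigenvectorBasis i)
    rw [inner_self_eq_norm_sq_to_K, h1] at h2
    rw [dotProduct_comm]
    simpa using h2.symm
  have hs : (X - (c:ℂ) • 1) *ᵥ v = X *ᵥ v - (c:ℂ) • v := by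
    rw [Matrix.sub_mulVec, Matrix.smul_mulVec, Matrix.one_mulVec]
  have hd : dotProduct (star v) ((X - (c:ℂ) • 1) *ᵥ v)
      = dotProduct (star v) (X *ᵥ v) - (c:ℂ) := by
    rw [hs, dotProduct_sub, dotProduct_smul, hvv, smul_eq_mul, mul_one]
  have hnn := hpsd.re_dotProduct_nonneg v
  rw [hd, map_sub] at hnn
  have he := hX.eigenvalues_eq i
  rw [← hv] at he
  simp at hnn
  rw [show RCLike.re (star v ⬝ᵥ X *ᵥ v) = (star v ⬝ᵥ X *ᵥ v).re from rfl] at he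
  linarith [hnn, he.ge]

end eigenlb

lemma psd_smul {n : ℕ} {M : Matrix (Fin n) (Fin n) ℂ} (hM : M.PosSemidef) {c : ℝ}
    (hc : 0 ≤ c) : ((c:ℂ) • M).PosSemidef := by
  constructor
  · show Matrix.conjTranspose ((c:ℂ) • M) = (c:ℂ) • M
    rw [Matrix.conjTranspose_smul, hM.1.eq]
    congr 1
    simp [Complex.star_def, Complex.conj_ofReal]
  · intro x
    exact (hM.smul (Complex.zero_le_real.mpr hc)).2 x


theorem stmt_9 {n : ℕ} (T S : Matrix (Fin n) (Fin n) ℂ)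
    (hT : T.PosDef) (hS : S.PosDef)
    (m m' M' M : ℝ) (hm : 0 < m) (hmm' : m ≤ m') (hm'M' : m' < M') (hM'M : M' ≤ M)
    (hT1 : LoewnerLE ((m : ℂ) • (1 : Matrix (Fin n) (Fin n) ℂ)) T)
    (hT2 : LoewnerLE T ((m' : ℂ) • (1 : Matrix (Fin n) (Fin n) ℂ)))
    (hS1 : LoewnerLE ((M' : ℂ) • (1 : Matrix (Fin n) (Fin n) ℂ)) S)
    (hS2 : LoewnerLE S ((M : ℂ) • (1 : Matrix (Fin n) (Fin n) ℂ)))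
    (ν κ : ℝ) (hν : 0 ≤ ν) (hνκ : ν < κ) (hκ : κ ≤ 1)
    (h r r' : ℝ) (hh : h = M' / m')
    (hr : r = min (ν / κ) (1 - ν / κ)) (hr' : r' = min (2 * r) (1 - 2 * r)) :
    LoewnerLE
      (r • (opHeinz κ T S + opHeinz 0 T S - (2 : ℝ) • opHeinz (κ / 2) T S)
        + (kantorovich (h ^ (κ / 2)) ^ r') • opHeinz ν T S)
      (opHeinz 0 T S - (ν / κ) • (opHeinz 0 T S - opHeinz κ T S)) := by
  have hκ0 : 0 < κ := lt_of_le_of_lt hν hνκ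
  have hm'0 : 0 < m' := lt_of_lt_of_le hm hmm'
  have hh1 : 1 < h := by rw [hh]; exact (one_lt_div hm'0).mpr hm'M'
  have hh0 : 0 < h := lt_trans one_pos hh1
  have hT' : T.IsHermitian := hT.1
  have hBdef : mpow T (-(1/2)) = hT'.cfc (fun x : ℝ => x ^ (-(1/2) : ℝ)) := hT'.cfc_eq _
  have hB_herm : (mpow T (-(1/2))).IsHermitian := by
    rw [hBdef]; exact herm_cfc_isHermitian hT' _
  have hA_herm : (mpow T (1/2)).IsHermitian := by
    rw [show mpow T (1/2) = hT'.cfc (fun x : ℝ => x ^ ((1/2) : ℝ)) from hT'.cfc_eq _]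
    exact herm_cfc_isHermitian hT' _
  have hTid : hT'.cfc (fun x : ℝ => x) = T := by
    conv_rhs => rw [hT'.spectral_theorem]
    unfold Matrix.IsHermitian.cfc
    rfl
  have hBTB : mpow T (-(1/2)) * T * mpow T (-(1/2)) = 1 := by
    have step : mpow T (-(1/2)) * T * mpow T (-(1/2))
        = hT'.cfc (fun x : ℝ => x ^ (-(1/2) : ℝ)) * hT'.cfc (fun x : ℝ => x)
          * hT'.cfc (fun x : ℝ => x ^ (-(1/2) : ℝ)) := by
      rw [hBdef, hTid]
    rw [step, herm_cfc_mul, herm_cfc_mul]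
    refine Eq.trans ?_ (herm_cfc_one hT')
    apply herm_cfc_congr
    intro i
    have hx : 0 < hT'.eigenvalues i := hT.eigenvalues_pos i
    show (hT'.eigenvalues i) ^ (-(1/2) : ℝ) * (hT'.eigenvalues i)
        * (hT'.eigenvalues i) ^ (-(1/2) : ℝ) = 1
    rw [show (hT'.eigenvalues i) ^ (-(1/2) : ℝ) * (hT'.eigenvalues i)
          * (hT'.eigenvalues i) ^ (-(1/2) : ℝ)
        = (hT'.eigenvalues i) ^ (-(1/2) : ℝ) * (hT'.eigenvalues i) ^ (-(1/2) : ℝ)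
          * (hT'.eigenvalues i) from by ring,
      ← Real.rpow_add hx, show (-(1/2) : ℝ) + -(1/2) = -1 by norm_num,
      Real.rpow_neg_one]
    exact inv_mul_cancel₀ hx.ne'
  have hX : (mpow T (-(1/2)) * S * mpow T (-(1/2))).IsHermitian := by
    rw [show mpow T (-(1/2)) * S * mpow T (-(1/2))
        = mpow T (-(1/2)) * S * Matrix.conjTranspose (mpow T (-(1/2))) from by
      rw [hB_herm.eq]]
    exact Matrix.isHermitian_mul_mul_conjTranspose _ hS.1
  have hST : (S - (h:ℂ) • T).PosSemidef := by
    have hcm : (h:ℂ) * (m':ℂ) = (M':ℂ) := by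
      rw [← Complex.ofReal_mul]
      congr 1
      rw [hh]; field_simp
    have e : S - (h:ℂ) • T = (S - (M':ℂ) • 1) + (h:ℂ) • ((m':ℂ) • 1 - T) := by
      rw [smul_sub, smul_smul, hcm]; abel
    rw [e]
    exact Matrix.PosSemidef.add hS1 (psd_smul hT2 hh0.le)
  have hXh : ((mpow T (-(1/2)) * S * mpow T (-(1/2))) - (h:ℂ) • 1).PosSemidef := by
    have e2 : (mpow T (-(1/2)) * S * mpow T (-(1/2))) - (h:ℂ) • 1
        = mpow T (-(1/2)) * (S - (h:ℂ) • T) * Matrix.conjTranspose (mpow T (-(1/2))) := by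
      rw [hB_herm.eq, Matrix.mul_sub, Matrix.sub_mul, mul_smul_comm, smul_mul_assoc, hBTB]
    rw [e2]
    exact hST.mul_mul_conjTranspose_same _
  have heig : ∀ i, h ≤ hX.eigenvalues i := fun i => eigen_lb hX hXh i
  have hrep : ∀ α : ℝ, opHeinz α T S
      = mpow T (1/2) * hX.cfc (fun x : ℝ => 2⁻¹ * (x ^ α + x ^ (1-α))) * mpow T (1/2) := by
    intro α
    unfold opHeinz geomMean
    rw [show mpow (mpow T (-(1/2)) * S * mpow T (-(1/2))) α
          = hX.cfc (fun x : ℝ => x ^ α) from hX.cfc_eq _,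
        show mpow (mpow T (-(1/2)) * S * mpow T (-(1/2))) (1-α)
          = hX.cfc (fun x : ℝ => x ^ (1-α)) from hX.cfc_eq _,
        show ∀ C D : Matrix (Fin n) (Fin n) ℂ,
            mpow T (1/2) * C * mpow T (1/2) + mpow T (1/2) * D * mpow T (1/2)
          = mpow T (1/2) * (C + D) * mpow T (1/2) from fun C D => by noncomm_ring,
        herm_cfc_add hX, ← smul_mul_assoc, ← mul_smul_comm, herm_cfc_smul hX]
  show ((opHeinz 0 T S - (ν/κ) • (opHeinz 0 T S - opHeinz κ T S))
    - (r • (opHeinz κ T S + opHeinz 0 T S - (2:ℝ) • opHeinz (κ/2) T S)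
      + (kantorovich (h ^ (κ/2)) ^ r') • opHeinz ν T S)).PosSemidef
  rw [hrep 0, hrep κ, hrep (κ/2), hrep ν]
  rw [show ∀ C0 Cκ Ch Cν : Matrix (Fin n) (Fin n) ℂ,
      ((mpow T (1/2) * C0 * mpow T (1/2)
          - (ν/κ) • (mpow T (1/2) * C0 * mpow T (1/2) - mpow T (1/2) * Cκ * mpow T (1/2)))
        - (r • (mpow T (1/2) * Cκ * mpow T (1/2) + mpow T (1/2) * C0 * mpow T (1/2)
            - (2:ℝ) • (mpow T (1/2) * Ch * mpow T (1/2)))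
          + (kantorovich (h ^ (κ/2)) ^ r') • (mpow T (1/2) * Cν * mpow T (1/2))))
      = mpow T (1/2) * ((C0 - (ν/κ) • (C0 - Cκ))
          - (r • (Cκ + C0 - (2:ℝ) • Ch) + (kantorovich (h ^ (κ/2)) ^ r') • Cν)) * mpow T (1/2)
    from fun C0 Cκ Ch Cν => by
      simp only [Matrix.mul_sub, Matrix.sub_mul, Matrix.mul_add, Matrix.add_mul,
        mul_smul_comm, smul_mul_assoc, smul_sub, smul_add]
      try module]
  simp only [herm_cfc_smul hX, herm_cfc_sub hX, herm_cfc_add hX]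
  nth_rewrite 2 [show mpow T (1/2) = Matrix.conjTranspose (mpow T (1/2)) from
    hA_herm.eq.symm]
  refine Matrix.PosSemidef.mul_mul_conjTranspose_same (herm_cfc_psd hX ?_) _
  intro i
  have hs := scalar_main hh1 hν hνκ hκ hr hr' (heig i)
  linarith [hs]
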